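/- Conformal time-dependent mechanics (m = 1). Take base ℝ with coordinate t, Hamiltonian H(t,u^α,p_α) = (1/2)δ^{αβ}p_α p_β, and a 1-form ϑ = ϑ_t(t) dt (automatically closed). Then: (A) a section φ(t) = (t, σ^α(t), p_α(t)) of J¹π* → ℝ satisfies φ*(ι_X(Ω_θ)_h) = 0 for all vector fields X if and only if dσ^α/dt = p_α and dp_α/dt = ϑ_t p_α. (B) For smooth ρ(t,u), γ_α(t,u) with the 1+? -form γ̄ = ρ dt + γ_α du^α closed (i.e. ∂ρ/∂u^α = ∂γ_α/∂t and ∂γ_α/∂u^β = ∂γ_β/∂u^α), the condition d_ϑ(h∘μ∘γ̄) = 0 holds if and only if Σ_β γ_β(t,u) ∂γ_α/∂u^β(t,u) + ∂γ_α/∂t(t,u) − ϑ_t(t) γ_α(t,u) = 0 for all (t,u); and when this holds, every σ with dσ^α/dt = γ_α(t,σ(t)) gives a curve t ↦ (t, σ(t), γ_α(t,σ(t))) solving the equations in (A). -/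

import Mathlib

open scoped BigOperators

noncomputable section

/-- A raw `k`-cochain on `E`: a scalar function of a point and `k` tangent vectors.
Smooth differential `k`-forms are regarded as such cochains by evaluation. -/
abbrev Coch (E : Type) (k : ℕ) : Type := E → (Fin k → E) → ℝ

/-- The (componentwise) exterior derivative of a `k`-cochain:
`(dω)(x)(v₀,…,v_k) = ∑ⱼ (-1)ʲ ∂_{vⱼ}(y ↦ ω(y)(v₀,…,v̂ⱼ,…,v_k))(x)`. -/
noncomputable def extDer {E : Type} [NormedAddCommGroup E] [NormedSpace ℝ E] {k : ℕ}
    (ω : Coch E k) : Coch E (k + 1) := fun x v =>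
  ∑ j : Fin (k + 1),
    (-1 : ℝ) ^ (j : ℕ) * fderiv ℝ (fun y => ω y (v ∘ j.succAbove)) x (v j)

/-- Wedge product of a 1-cochain with a `k`-cochain:
`(θ∧ω)(x)(v₀,…,v_k) = ∑ⱼ (-1)ʲ θ(x)(vⱼ) ω(x)(v₀,…,v̂ⱼ,…,v_k)`. -/
def wedge1 {E : Type} {k : ℕ} (θ : Coch E 1) (ω : Coch E k) : Coch E (k + 1) := fun x v =>
  ∑ j : Fin (k + 1), (-1 : ℝ) ^ (j : ℕ) * θ x (fun _ => v j) * ω x (v ∘ j.succAbove)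

/-- Interior product (contraction) of a cochain with a vector field. -/
def iotaV {E : Type} {k : ℕ} (X : E → E) (ω : Coch E (k + 1)) : Coch E k := fun x v =>
  ω x (Fin.cons (X x) v)

/-- Pullback of a cochain along a (smooth) map. -/
noncomputable def pullC {E F : Type} [NormedAddCommGroup E] [NormedSpace ℝ E]
    [NormedAddCommGroup F] [NormedSpace ℝ F] {k : ℕ}
    (f : F → E) (ω : Coch E k) : Coch F k := fun x v =>
  ω (f x) fun a => fderiv ℝ f x (v a)

/-- The differential of a function, as a 1-cochain. -/
noncomputable def dFun {E : Type} [NormedAddCommGroup E] [NormedSpace ℝ E]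
    (H : E → ℝ) : Coch E 1 := fun q v => fderiv ℝ H q (v 0)

/-! ## The coordinate model of first-order Hamiltonian field theory

The base is `ℝ^m` with coordinates `xⁱ`, the configuration bundle is `E = ℝ^m × ℝ^N` with
fibre coordinates `u^α`, and the reduced multimomentum bundle is
`J¹π* = ℝ^m × ℝ^N × ℝ^{mN}` with coordinates `(xⁱ, u^α, pⁱ_α)`. -/

/-- `J¹π* = ℝ^m × ℝ^N × ℝ^{mN}` in coordinates `(xⁱ, u^α, pⁱ_α)`. -/
abbrev Jb (m N : ℕ) : Type := (Fin m → ℝ) × (Fin N → ℝ) × (Fin m → Fin N → ℝ)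

/-- The coordinate volume form `d_mx = dx¹∧⋯∧dx^m` on `J¹π*`. -/
def dmxJ (m N : ℕ) : Coch (Jb m N) m := fun _ v => Matrix.det (Matrix.of fun a b => (v b).1 a)

/-- The coordinate 1-form `du^α` on `J¹π*`. -/
def duJ (m N : ℕ) (α : Fin N) : Coch (Jb m N) 1 := fun _ v => (v 0).2.1 α

/-- The coordinate 1-form `dpⁱ_α` on `J¹π*`. -/
def dpJ (m N : ℕ) (i : Fin m) (α : Fin N) : Coch (Jb m N) 1 := fun _ v => (v 0).2.2 i α

/-- The coordinate vector `∂/∂xⁱ` on `J¹π*`. -/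
def XdirJ (m N : ℕ) (i : Fin m) : Jb m N := (Pi.single i 1, 0, 0)

/-- The coordinate vector `∂/∂u^α` on `J¹π*`. -/
def UdirJ (m N : ℕ) (α : Fin N) : Jb m N := (0, Pi.single α 1, 0)

/-- The coordinate vector `∂/∂pⁱ_α` on `J¹π*`. -/
def PdirJ (m N : ℕ) (i : Fin m) (α : Fin N) : Jb m N := (0, 0, Pi.single i (Pi.single α 1))

/-- The `m`-form `du^α ∧ (∂_i ⌟ d_mx) = -(∂_i ⌟ (du^α ∧ d_mx))` on `J¹π*`. -/
def duContr (m N : ℕ) (α : Fin N) (i : Fin m) : Coch (Jb m N) m := fun q v =>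
  -(iotaV (fun _ => XdirJ m N i) (wedge1 (duJ m N α) (dmxJ m N)) q v)

/-- The Hamiltonian `(m+1)`-form `Ω_h = dH∧d_mx − dpⁱ_α∧du^α∧(∂_i⌟d_mx)` on `J¹π*`. -/
noncomputable def OmegaH (m N : ℕ) (H : Jb m N → ℝ) : Coch (Jb m N) (m + 1) := fun q v =>
  wedge1 (dFun H) (dmxJ m N) q v -
    ∑ i : Fin m, ∑ α : Fin N, wedge1 (dpJ m N i α) (duContr m N α i) q v

/-- The `m`-form `Θ_h = −H d_mx + pⁱ_α du^α∧(∂_i⌟d_mx)` on `J¹π*`. -/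
noncomputable def ThetaHc (m N : ℕ) (H : Jb m N → ℝ) : Coch (Jb m N) m := fun q v =>
  -(H q) * dmxJ m N q v + ∑ i : Fin m, ∑ α : Fin N, q.2.2 i α * duContr m N α i q v

/-- The pullback to `J¹π*` of the 1-form `ϑ = ϑ_i(x) dxⁱ` on the base. -/
def thJ (m N : ℕ) (ϑ : (Fin m → ℝ) → Fin m → ℝ) : Coch (Jb m N) 1 := fun q v =>
  ∑ i : Fin m, ϑ q.1 i * (v 0).1 i

/-- The locally conformal Hamiltonian `(m+1)`-form `(Ω_θ)_h = Ω_h + θ∧Θ_h` on `J¹π*`. -/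
noncomputable def OmegaThH (m N : ℕ) (H : Jb m N → ℝ) (ϑ : (Fin m → ℝ) → Fin m → ℝ) :
    Coch (Jb m N) (m + 1) := fun q v =>
  OmegaH m N H q v + wedge1 (thJ m N ϑ) (ThetaHc m N H) q v

/-- The section `φ(x) = (x, φ^α(x), φⁱ_α(x))` of `J¹π* → ℝ^m`. -/
def secJ (m N : ℕ) (φ : (Fin m → ℝ) → Fin N → ℝ) (P : (Fin m → ℝ) → Fin m → Fin N → ℝ) :
    (Fin m → ℝ) → Jb m N := fun x => (x, φ x, P x)

/-- Closedness of the 1-form `ϑ_i(x) dxⁱ` on `ℝ^m`, in coordinates. -/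
def ClosedOneForm (m : ℕ) (ϑ : (Fin m → ℝ) → Fin m → ℝ) : Prop :=
  ∀ (x : Fin m → ℝ) (i j : Fin m),
    fderiv ℝ (fun y => ϑ y i) x (Pi.single j 1) = fderiv ℝ (fun y => ϑ y j) x (Pi.single i 1)

/-- The Hamilton–De Donder–Weyl equations in coordinates:
`∂φ^α/∂xⁱ = ∂H/∂pⁱ_α ∘ φ` and `∑ᵢ ∂φⁱ_α/∂xⁱ = −∂H/∂u^α ∘ φ`. -/
def HDWeq (m N : ℕ) (H : Jb m N → ℝ) (φ : (Fin m → ℝ) → Fin N → ℝ)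
    (P : (Fin m → ℝ) → Fin m → Fin N → ℝ) : Prop :=
  (∀ (x : Fin m → ℝ) (i : Fin m) (α : Fin N),
      fderiv ℝ φ x (Pi.single i 1) α = fderiv ℝ H (secJ m N φ P x) (PdirJ m N i α)) ∧
  (∀ (x : Fin m → ℝ) (α : Fin N),
      (∑ i : Fin m, fderiv ℝ P x (Pi.single i 1) i α) =
        -(fderiv ℝ H (secJ m N φ P x) (UdirJ m N α)))

/-- The locally conformal Hamilton–De Donder–Weyl equations in coordinates:
`∂φ^α/∂xⁱ = ∂H/∂pⁱ_α ∘ φ` and `∑ᵢ ∂φⁱ_α/∂xⁱ = −∂H/∂u^α ∘ φ + ϑ_i φⁱ_α`. -/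
def lcHDWeq (m N : ℕ) (H : Jb m N → ℝ) (ϑ : (Fin m → ℝ) → Fin m → ℝ)
    (φ : (Fin m → ℝ) → Fin N → ℝ) (P : (Fin m → ℝ) → Fin m → Fin N → ℝ) : Prop :=
  (∀ (x : Fin m → ℝ) (i : Fin m) (α : Fin N),
      fderiv ℝ φ x (Pi.single i 1) α = fderiv ℝ H (secJ m N φ P x) (PdirJ m N i α)) ∧
  (∀ (x : Fin m → ℝ) (α : Fin N),
      (∑ i : Fin m, fderiv ℝ P x (Pi.single i 1) i α) =
        -(fderiv ℝ H (secJ m N φ P x) (UdirJ m N α)) + ∑ i : Fin m, ϑ x i * P x i α)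

/-- The configuration bundle `E = ℝ × ℝ^N` with coordinates `(t, u^α)` (here `m = 1`). -/
abbrev Eb (N : ℕ) : Type := (Fin 1 → ℝ) × (Fin N → ℝ)

/-- The pullback to `E` of the 1-form `ϑ = ϑ_t dt` on the base `ℝ`. -/
def thE (N : ℕ) (ϑ : (Fin 1 → ℝ) → Fin 1 → ℝ) : Coch (Eb N) 1 := fun e v =>
  ϑ e.1 0 * (v 0).1 0

section Helpers
open ContinuousLinearMap

variable {N : ℕ}

lemma dmxJ_one (q : Jb 1 N) (v : Fin 1 → Jb 1 N) : dmxJ 1 N q v = (v 0).1 0 := by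
  simp [dmxJ, Matrix.det_fin_one]

lemma duContr_one (α : Fin N) (q : Jb 1 N) (v : Fin 1 → Jb 1 N) :
    duContr 1 N α 0 q v = (v 0).2.1 α := by
  simp [duContr, iotaV, wedge1, duJ, dmxJ, Fin.sum_univ_two, XdirJ, Matrix.det_fin_one,
    Fin.succAbove]

end Helpers
lemma hasFDerivAt_half_sq {E : Type} [NormedAddCommGroup E] [NormedSpace ℝ E] {n : ℕ}
    (f : Fin n → E → ℝ) (D : Fin n → (E →L[ℝ] ℝ)) (x : E)
    (h : ∀ α, HasFDerivAt (f α) (D α) x) :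
    HasFDerivAt (fun y => (1/2 : ℝ) * ∑ α, f α y * f α y) (∑ α, f α x • D α) x := by
  have h2 := (HasFDerivAt.fun_sum (fun α (_ : α ∈ Finset.univ) => (h α).fun_mul (h α))).const_mul
    (1/2 : ℝ)
  refine h2.congr_fderiv ?_
  ext v
  simp only [ContinuousLinearMap.coe_sum', Finset.sum_apply, ContinuousLinearMap.coe_smul',
    Pi.smul_apply, ContinuousLinearMap.add_apply, smul_eq_mul, Finset.mul_sum]
  exact Finset.sum_congr rfl fun α _ => by ring

/-- the continuous linear map `q ↦ q.2.2 0 α` on `Jb 1 N`. -/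
def pCLM (N : ℕ) (α : Fin N) : Jb 1 N →L[ℝ] ℝ :=
  (ContinuousLinearMap.proj α).comp (((ContinuousLinearMap.proj (0 : Fin 1)).comp
    ((ContinuousLinearMap.snd ℝ (Fin N → ℝ) (Fin 1 → Fin N → ℝ)))).comp
    (ContinuousLinearMap.snd ℝ (Fin 1 → ℝ) ((Fin N → ℝ) × (Fin 1 → Fin N → ℝ))))

lemma pCLM_apply {N : ℕ} (α : Fin N) (q : Jb 1 N) : pCLM N α q = q.2.2 0 α := rfl

lemma fderiv_H {N : ℕ} (H : Jb 1 N → ℝ)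
    (hHdef : ∀ q : Jb 1 N, H q = (1 / 2) * ∑ α : Fin N, q.2.2 0 α * q.2.2 0 α)
    (q : Jb 1 N) (Y : Jb 1 N) :
    fderiv ℝ H q Y = ∑ α, q.2.2 0 α * Y.2.2 0 α := by
  have hHeq : H = fun q => (1/2 : ℝ) * ∑ α, pCLM N α q * pCLM N α q := funext hHdef
  rw [hHeq]
  have h := hasFDerivAt_half_sq (fun α => (pCLM N α : Jb 1 N → ℝ)) (pCLM N) q
    (fun α => (pCLM N α).hasFDerivAt)
  rw [h.fderiv]
  simp [pCLM_apply]
lemma fderiv_secJ {N : ℕ} (σ : (Fin 1 → ℝ) → Fin N → ℝ) (P : (Fin 1 → ℝ) → Fin 1 → Fin N → ℝ)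
    (hσ : Differentiable ℝ σ) (hP : Differentiable ℝ P) (t s : Fin 1 → ℝ) :
    fderiv ℝ (secJ 1 N σ P) t s = (s, fderiv ℝ σ t s, fderiv ℝ P t s) := by
  have h : HasFDerivAt (secJ 1 N σ P)
      ((ContinuousLinearMap.id ℝ (Fin 1 → ℝ)).prod ((fderiv ℝ σ t).prod (fderiv ℝ P t))) t :=
    HasFDerivAt.prodMk (hasFDerivAt_id t) (((hσ t).hasFDerivAt).prodMk ((hP t).hasFDerivAt))
  rw [h.fderiv]; rfl

lemma OmegaThH_eval {N : ℕ} (H : Jb 1 N → ℝ)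
    (hHdef : ∀ q : Jb 1 N, H q = (1 / 2) * ∑ α : Fin N, q.2.2 0 α * q.2.2 0 α)
    (ϑ : (Fin 1 → ℝ) → Fin 1 → ℝ) (q : Jb 1 N) (v : Fin 2 → Jb 1 N) :
    OmegaThH 1 N H ϑ q v =
      (∑ α, q.2.2 0 α * (v 0).2.2 0 α) * (v 1).1 0
      - (∑ α, q.2.2 0 α * (v 1).2.2 0 α) * (v 0).1 0
      - ∑ α, ((v 0).2.2 0 α * (v 1).2.1 α - (v 1).2.2 0 α * (v 0).2.1 α)
      + ϑ q.1 0 * (v 0).1 0 * (-(H q) * (v 1).1 0 + ∑ α, q.2.2 0 α * (v 1).2.1 α)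
      - ϑ q.1 0 * (v 1).1 0 * (-(H q) * (v 0).1 0 + ∑ α, q.2.2 0 α * (v 0).2.1 α) := by
  simp only [OmegaThH, OmegaH, ThetaHc, wedge1, thJ, dFun, Fin.sum_univ_succ,
    Fin.sum_univ_zero, Fin.sum_univ_one, Fin.isValue, pow_zero, pow_one, one_mul, neg_one_mul,
    fderiv_H H hHdef]
  simp only [Function.comp, Fin.succAbove, dmxJ_one, duContr_one, dpJ]
  norm_num [Fin.lt_def]
  simp only [sub_eq_add_neg, Finset.sum_add_distrib, Finset.sum_neg_distrib]
  ring
lemma fin1_decomp (s : Fin 1 → ℝ) : s = s 0 • (Pi.single 0 1 : Fin 1 → ℝ) := by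
  funext i
  fin_cases i
  simp

lemma partA {N : ℕ} (H : Jb 1 N → ℝ)
    (hHdef : ∀ q : Jb 1 N, H q = (1 / 2) * ∑ α : Fin N, q.2.2 0 α * q.2.2 0 α)
    (ϑ : (Fin 1 → ℝ) → Fin 1 → ℝ)
    (σ : (Fin 1 → ℝ) → Fin N → ℝ) (P : (Fin 1 → ℝ) → Fin 1 → Fin N → ℝ)
    (hσ : ContDiff ℝ (⊤ : ℕ∞) σ) (hP : ContDiff ℝ (⊤ : ℕ∞) P) :
    ((∀ X : Jb 1 N → Jb 1 N, ContDiff ℝ (⊤ : ℕ∞) X →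
        ∀ (t : Fin 1 → ℝ) (v : Fin 1 → Fin 1 → ℝ),
          pullC (secJ 1 N σ P) (iotaV X (OmegaThH 1 N H ϑ)) t v = 0) ↔
      (∀ (t : Fin 1 → ℝ) (α : Fin N),
        fderiv ℝ σ t (Pi.single 0 1) α = P t 0 α ∧
        fderiv ℝ P t (Pi.single 0 1) 0 α = ϑ t 0 * P t 0 α)) := by
  have hσd : Differentiable ℝ σ := hσ.differentiable (by simp)
  have hPd : Differentiable ℝ P := hP.differentiable (by simp)
  have hpull : ∀ (X : Jb 1 N → Jb 1 N) (t : Fin 1 → ℝ) (v : Fin 1 → Fin 1 → ℝ),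
      pullC (secJ 1 N σ P) (iotaV X (OmegaThH 1 N H ϑ)) t v =
        OmegaThH 1 N H ϑ (secJ 1 N σ P t)
          (Fin.cons (X (secJ 1 N σ P t))
            (fun _ => ((v 0), fderiv ℝ σ t (v 0), fderiv ℝ P t (v 0)))) := by
    intro X t v
    simp only [pullC, iotaV]
    congr 1
    funext a
    refine Fin.cases rfl (fun i => ?_) a
    have : i = 0 := Subsingleton.elim i 0
    subst this
    show fderiv ℝ (secJ 1 N σ P) t (v 0) = _
    rw [fderiv_secJ σ P hσd hPd, Fin.cons_succ]
  constructor
  · intro h t α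
    constructor
    · have h1 := h (fun _ => PdirJ 1 N 0 α) contDiff_const t (fun _ => Pi.single 0 1)
      rw [hpull, OmegaThH_eval H hHdef] at h1
      simp only [Fin.cons_zero, Fin.cons_one, PdirJ, secJ, Pi.single_eq_same,
        Pi.single_apply, Pi.zero_apply, mul_ite, ite_mul, mul_zero, zero_mul, mul_one,
        one_mul, Finset.sum_ite_eq', Finset.mem_univ, if_true, sub_zero, zero_sub,
        neg_neg, mul_neg, neg_zero, add_zero, zero_add, Finset.sum_const_zero] at h1
      linarith
    · have h1 := h (fun _ => UdirJ 1 N α) contDiff_const t (fun _ => Pi.single 0 1)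
      rw [hpull, OmegaThH_eval H hHdef] at h1
      simp only [Fin.cons_zero, Fin.cons_one, UdirJ, secJ, Pi.single_eq_same,
        Pi.single_apply, Pi.zero_apply, mul_ite, ite_mul, mul_zero, zero_mul, mul_one,
        one_mul, Finset.sum_ite_eq', Finset.mem_univ, if_true, sub_zero, zero_sub,
        neg_neg, mul_neg, neg_zero, add_zero, zero_add, Finset.sum_const_zero,
        Finset.sum_neg_distrib] at h1
      linarith
  · intro h X hX t v
    rw [hpull, OmegaThH_eval H hHdef]
    simp only [Fin.cons_zero, Fin.cons_one, secJ]
    have hσs : fderiv ℝ σ t (v 0) = (v 0) 0 • fderiv ℝ σ t (Pi.single 0 1) := by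
      conv_lhs => rw [fin1_decomp (v 0)]
      exact (fderiv ℝ σ t).map_smul _ _
    have hPs : fderiv ℝ P t (v 0) = (v 0) 0 • fderiv ℝ P t (Pi.single 0 1) := by
      conv_lhs => rw [fin1_decomp (v 0)]
      exact (fderiv ℝ P t).map_smul _ _
    rw [hσs, hPs, hHdef]
    set Y := X (t, σ t, P t)
    have e1 : ∀ β, fderiv ℝ σ t (Pi.single 0 1) β = P t 0 β := fun β => (h t β).1
    have e2 : ∀ β, fderiv ℝ P t (Pi.single 0 1) 0 β = ϑ t 0 * P t 0 β := fun β => (h t β).2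
    simp only [Pi.smul_apply, smul_eq_mul, e1, e2]
    have hs1 : ∑ β, P t 0 β * (v 0 0 * (ϑ t 0 * P t 0 β)) =
        v 0 0 * (ϑ t 0 * ∑ β, P t 0 β * P t 0 β) := by
      rw [Finset.mul_sum, Finset.mul_sum]
      exact Finset.sum_congr rfl fun _ _ => by ring
    have hs2 : ∑ β, P t 0 β * (v 0 0 * P t 0 β) = v 0 0 * ∑ β, P t 0 β * P t 0 β := by
      rw [Finset.mul_sum]
      exact Finset.sum_congr rfl fun _ _ => by ring
    have hs3 : ∑ β, (Y.2.2 0 β * (v 0 0 * P t 0 β) - v 0 0 * (ϑ t 0 * P t 0 β) * Y.2.1 β) =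
        v 0 0 * ∑ β, P t 0 β * Y.2.2 0 β
          - v 0 0 * (ϑ t 0 * ∑ β, P t 0 β * Y.2.1 β) := by
      rw [Finset.sum_sub_distrib, Finset.mul_sum, Finset.mul_sum, Finset.mul_sum]
      congr 1
      · exact Finset.sum_congr rfl fun _ _ => by ring
      · exact Finset.sum_congr rfl fun _ _ => by ring
    rw [hs1, hs2, hs3]
    ring
lemma Eb_decomp {N : ℕ} (X : Eb N) :
    X = X.1 0 • ((Pi.single 0 1 : Fin 1 → ℝ), (0 : Fin N → ℝ)) +
      ∑ β : Fin N, X.2 β • ((0 : Fin 1 → ℝ), (Pi.single β 1 : Fin N → ℝ)) := by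
  refine Prod.ext ?_ ?_
  · simp only [Prod.fst_add, Prod.smul_fst, Prod.fst_sum]
    simp only [smul_zero, Finset.sum_const_zero, add_zero]
    exact fin1_decomp X.1
  · simp only [Prod.snd_add, Prod.smul_snd, Prod.snd_sum]
    simp only [smul_zero, zero_add]
    funext i
    simp [Pi.single_apply, Finset.sum_ite_eq', mul_ite]

lemma fderiv_dir_decomp {N : ℕ} (f : Eb N → ℝ) (e : Eb N) (X : Eb N) :
    fderiv ℝ f e X = X.1 0 * fderiv ℝ f e ((Pi.single 0 1 : Fin 1 → ℝ), 0) +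
      ∑ β : Fin N, X.2 β * fderiv ℝ f e ((0 : Fin 1 → ℝ), Pi.single β 1) := by
  conv_lhs => rw [Eb_decomp X]
  rw [map_add, map_smul, map_sum]
  simp only [map_smul, smul_eq_mul]

lemma fderiv_Gslot {N : ℕ} (H : Jb 1 N → ℝ)
    (hHdef : ∀ q : Jb 1 N, H q = (1 / 2) * ∑ α : Fin N, q.2.2 0 α * q.2.2 0 α)
    (γ : Eb N → Fin N → ℝ) (hγ : ContDiff ℝ (⊤ : ℕ∞) γ) (e : Eb N) (w X : Eb N) :
    fderiv ℝ (fun y => -(H (y.1, y.2, fun _ => γ y)) * w.1 0 + ∑ α, γ y α * w.2 α) e X =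
      -(∑ α, γ e α * fderiv ℝ (fun y => γ y α) e X) * w.1 0 +
        ∑ α, fderiv ℝ (fun y => γ y α) e X * w.2 α := by
  have hγd : Differentiable ℝ γ := hγ.differentiable (by simp)
  have hγα : ∀ α : Fin N, HasFDerivAt (fun y => γ y α)
      (fderiv ℝ (fun y => γ y α) e) e := by
    intro α
    exact (((ContinuousLinearMap.proj α).differentiable.comp hγd) e).hasFDerivAt
  have hHy : (fun y : Eb N => -(H (y.1, y.2, fun _ => γ y)) * w.1 0) =
      fun y => -((1/2 : ℝ) * ∑ α, γ y α * γ y α) * w.1 0 := by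
    funext y
    rw [hHdef]
  have t1 : HasFDerivAt (fun y : Eb N => -(H (y.1, y.2, fun _ => γ y)) * w.1 0)
      (w.1 0 • (-(∑ α, γ e α • fderiv ℝ (fun y => γ y α) e))) e := by
    rw [hHy]
    exact ((hasFDerivAt_half_sq (fun α y => γ y α) _ e hγα).neg).mul_const (w.1 0)
  have t2 : HasFDerivAt (fun y : Eb N => ∑ α, γ y α * w.2 α)
      (∑ α, w.2 α • fderiv ℝ (fun y => γ y α) e) e :=
    HasFDerivAt.fun_sum fun α _ => (hγα α).mul_const (w.2 α)
  rw [(t1.fun_add t2).fderiv]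
  simp only [ContinuousLinearMap.add_apply, ContinuousLinearMap.coe_smul', Pi.smul_apply,
    ContinuousLinearMap.neg_apply, ContinuousLinearMap.coe_sum', Finset.sum_apply,
    smul_eq_mul]
  have h2 : ∑ α, w.2 α * fderiv ℝ (fun y => γ y α) e X =
      ∑ α, fderiv ℝ (fun y => γ y α) e X * w.2 α :=
    Finset.sum_congr rfl fun _ _ => mul_comm _ _
  rw [h2]
  ring
lemma fderiv_Gslot' {N : ℕ} (H : Jb 1 N → ℝ)
    (hHdef : ∀ q : Jb 1 N, H q = (1 / 2) * ∑ α : Fin N, q.2.2 0 α * q.2.2 0 α)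
    (γ : Eb N → Fin N → ℝ) (hγ : ContDiff ℝ (⊤ : ℕ∞) γ) (e : Eb N) (w X : Eb N) :
    fderiv ℝ (fun y => -(H (y.1, y.2, fun _ => γ y) * w.1 0) + ∑ α, γ y α * w.2 α) e X =
      -(∑ α, γ e α * fderiv ℝ (fun y => γ y α) e X) * w.1 0 +
        ∑ α, fderiv ℝ (fun y => γ y α) e X * w.2 α := by
  have hfun : (fun y : Eb N => -(H (y.1, y.2, fun _ => γ y) * w.1 0) + ∑ α, γ y α * w.2 α)
      = fun y => -(H (y.1, y.2, fun _ => γ y)) * w.1 0 + ∑ α, γ y α * w.2 α := by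
    funext y; ring
  rw [hfun, fderiv_Gslot H hHdef γ hγ]

lemma B_eval {N : ℕ} (H : Jb 1 N → ℝ)
    (hHdef : ∀ q : Jb 1 N, H q = (1 / 2) * ∑ α : Fin N, q.2.2 0 α * q.2.2 0 α)
    (γ : Eb N → Fin N → ℝ) (hγ : ContDiff ℝ (⊤ : ℕ∞) γ)
    (ϑ : (Fin 1 → ℝ) → Fin 1 → ℝ) (e : Eb N) (v : Fin 2 → Eb N) :
    extDer (fun (e : Eb N) (v : Fin 1 → Eb N) =>
        -(H (e.1, e.2, fun _ => γ e)) * (v 0).1 0 + ∑ α : Fin N, γ e α * (v 0).2 α) e v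
      - wedge1 (thE N ϑ) (fun (e : Eb N) (v : Fin 1 → Eb N) =>
        -(H (e.1, e.2, fun _ => γ e)) * (v 0).1 0 + ∑ α : Fin N, γ e α * (v 0).2 α) e v =
    (-(∑ α, γ e α * fderiv ℝ (fun y => γ y α) e (v 0)) * (v 1).1 0 +
        ∑ α, fderiv ℝ (fun y => γ y α) e (v 0) * (v 1).2 α)
    - (-(∑ α, γ e α * fderiv ℝ (fun y => γ y α) e (v 1)) * (v 0).1 0 +
        ∑ α, fderiv ℝ (fun y => γ y α) e (v 1) * (v 0).2 α)
    - ϑ e.1 0 * (v 0).1 0 *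
        (-(H (e.1, e.2, fun _ => γ e)) * (v 1).1 0 + ∑ α, γ e α * (v 1).2 α)
    + ϑ e.1 0 * (v 1).1 0 *
        (-(H (e.1, e.2, fun _ => γ e)) * (v 0).1 0 + ∑ α, γ e α * (v 0).2 α) := by
  simp only [extDer, wedge1, thE, Fin.sum_univ_succ, Fin.sum_univ_zero, pow_zero, pow_one,
    one_mul, neg_one_mul, Fin.isValue, Function.comp_apply, Fin.succ_zero_eq_one,
    add_zero]
  simp only [Fin.succAbove, Fin.lt_def, Function.comp]
  norm_num
  rw [fderiv_Gslot' H hHdef γ hγ, fderiv_Gslot' H hHdef γ hγ]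
  ring
lemma keyB {N : ℕ} (g T : Fin N → ℝ) (U : Fin N → Fin N → ℝ) (ϑ0 Hv : ℝ)
    (hcl : ∀ α β, U α β = U β α)
    (hHJ : ∀ α, (∑ β, g β * U α β) + T α - ϑ0 * g α = 0)
    (a c : ℝ) (b d : Fin N → ℝ) :
    (-(∑ α, g α * (a * T α + ∑ β, b β * U α β)) * c +
        ∑ α, (a * T α + ∑ β, b β * U α β) * d α)
    - (-(∑ α, g α * (c * T α + ∑ β, d β * U α β)) * a +
        ∑ α, (c * T α + ∑ β, d β * U α β) * b α)
    - ϑ0 * a * (-Hv * c + ∑ α, g α * d α)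
    + ϑ0 * c * (-Hv * a + ∑ α, g α * b α) = 0 := by
  have swap : ∀ (x y : Fin N → ℝ),
      ∑ α, (∑ β, x β * U α β) * y α = ∑ α, (∑ β, y β * U α β) * x α := by
    intro x y
    calc ∑ α, (∑ β, x β * U α β) * y α = ∑ α, ∑ β, x β * U α β * y α :=
          Finset.sum_congr rfl fun α _ => by rw [Finset.sum_mul]
      _ = ∑ β, ∑ α, x β * U α β * y α := Finset.sum_comm
      _ = ∑ β, (∑ α, y α * U β α) * x β := Finset.sum_congr rfl fun β _ => by
          rw [Finset.sum_mul]
          exact Finset.sum_congr rfl fun α _ => by rw [hcl α β]; ring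
  have h1 : ∀ (r : ℝ) (x : Fin N → ℝ),
      ∑ α, g α * (r * T α + ∑ β, x β * U α β) =
        r * (∑ α, g α * T α) + (ϑ0 * ∑ α, g α * x α - ∑ α, T α * x α) := by
    intro r x
    have e1 : ∑ α, g α * (r * T α + ∑ β, x β * U α β) =
        r * (∑ α, g α * T α) + ∑ α, (∑ β, x β * U α β) * g α := by
      simp only [mul_add, Finset.sum_add_distrib]
      congr 1
      · rw [Finset.mul_sum]; exact Finset.sum_congr rfl fun _ _ => by ring
      · exact Finset.sum_congr rfl fun _ _ => mul_comm _ _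
    rw [e1, swap x g]
    congr 1
    have e3 : ∑ α, (∑ β, g β * U α β) * x α = ∑ α, (ϑ0 * g α - T α) * x α :=
      Finset.sum_congr rfl fun α _ => by
        have hs : ∑ β, g β * U α β = ϑ0 * g α - T α := by linarith [hHJ α]
        rw [hs]
    rw [e3]
    simp only [sub_mul, Finset.sum_sub_distrib, Finset.mul_sum]
    congr 1
    exact Finset.sum_congr rfl fun _ _ => by ring
  have h2 : ∀ (r : ℝ) (x y : Fin N → ℝ),
      ∑ α, (r * T α + ∑ β, x β * U α β) * y α =
        r * (∑ α, T α * y α) + ∑ α, (∑ β, x β * U α β) * y α := by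
    intro r x y
    simp only [add_mul, Finset.sum_add_distrib]
    congr 1
    rw [Finset.mul_sum]; exact Finset.sum_congr rfl fun _ _ => by ring
  rw [h1 a b, h1 c d, h2 a b d, h2 c d b, swap b d]
  ring
lemma partB_forward {N : ℕ} (H : Jb 1 N → ℝ)
    (hHdef : ∀ q : Jb 1 N, H q = (1 / 2) * ∑ α : Fin N, q.2.2 0 α * q.2.2 0 α)
    (γ : Eb N → Fin N → ℝ) (hγ : ContDiff ℝ (⊤ : ℕ∞) γ)
    (ϑ : (Fin 1 → ℝ) → Fin 1 → ℝ)
    (hc2 : ∀ (e : Eb N) (α β : Fin N),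
      fderiv ℝ (fun y => γ y α) e (0, Pi.single β 1) =
        fderiv ℝ (fun y => γ y β) e (0, Pi.single α 1))
    (hcond : ∀ (e : Eb N) (v : Fin 2 → Eb N),
      extDer (fun (e : Eb N) (v : Fin 1 → Eb N) =>
          -(H (e.1, e.2, fun _ => γ e)) * (v 0).1 0 + ∑ α : Fin N, γ e α * (v 0).2 α) e v
        - wedge1 (thE N ϑ) (fun (e : Eb N) (v : Fin 1 → Eb N) =>
          -(H (e.1, e.2, fun _ => γ e)) * (v 0).1 0 + ∑ α : Fin N, γ e α * (v 0).2 α) e v = 0) :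
    ∀ (e : Eb N) (α : Fin N),
      (∑ β : Fin N, γ e β * fderiv ℝ (fun y => γ y α) e (0, Pi.single β 1)) +
        fderiv ℝ (fun y => γ y α) e (Pi.single 0 1, 0) - ϑ e.1 0 * γ e α = 0 := by
  intro e α
  have h1 := hcond e
    ![((Pi.single 0 1 : Fin 1 → ℝ), (0 : Fin N → ℝ)),
      ((0 : Fin 1 → ℝ), (Pi.single α 1 : Fin N → ℝ))]
  rw [B_eval H hHdef γ hγ] at h1
  simp only [Matrix.cons_val_zero, Matrix.cons_val_one, Matrix.head_cons, Pi.single_eq_same,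
    Pi.zero_apply, Pi.single_apply, mul_zero, zero_mul, mul_one, one_mul, mul_ite, ite_mul,
    Finset.sum_ite_eq', Finset.mem_univ, if_true, add_zero, zero_add, neg_zero, sub_zero,
    zero_sub, neg_mul, neg_neg, Finset.sum_const_zero] at h1
  have hswap : ∑ x : Fin N, γ e x * fderiv ℝ (fun y => γ y x) e (0, Pi.single α 1) =
      ∑ x : Fin N, γ e x * fderiv ℝ (fun y => γ y α) e (0, Pi.single x 1) :=
    Finset.sum_congr rfl fun x _ => by rw [hc2 e x α]
  rw [hswap] at h1
  linarith
lemma partB_backward {N : ℕ} (H : Jb 1 N → ℝ)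
    (hHdef : ∀ q : Jb 1 N, H q = (1 / 2) * ∑ α : Fin N, q.2.2 0 α * q.2.2 0 α)
    (γ : Eb N → Fin N → ℝ) (hγ : ContDiff ℝ (⊤ : ℕ∞) γ)
    (ϑ : (Fin 1 → ℝ) → Fin 1 → ℝ)
    (hc2 : ∀ (e : Eb N) (α β : Fin N),
      fderiv ℝ (fun y => γ y α) e (0, Pi.single β 1) =
        fderiv ℝ (fun y => γ y β) e (0, Pi.single α 1))
    (hHJ : ∀ (e : Eb N) (α : Fin N),
      (∑ β : Fin N, γ e β * fderiv ℝ (fun y => γ y α) e (0, Pi.single β 1)) +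
        fderiv ℝ (fun y => γ y α) e (Pi.single 0 1, 0) - ϑ e.1 0 * γ e α = 0) :
    ∀ (e : Eb N) (v : Fin 2 → Eb N),
      extDer (fun (e : Eb N) (v : Fin 1 → Eb N) =>
          -(H (e.1, e.2, fun _ => γ e)) * (v 0).1 0 + ∑ α : Fin N, γ e α * (v 0).2 α) e v
        - wedge1 (thE N ϑ) (fun (e : Eb N) (v : Fin 1 → Eb N) =>
          -(H (e.1, e.2, fun _ => γ e)) * (v 0).1 0 + ∑ α : Fin N, γ e α * (v 0).2 α) e v = 0 := by
  intro e v
  rw [B_eval H hHdef γ hγ]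
  have hd0 : ∀ α : Fin N, fderiv ℝ (fun y => γ y α) e (v 0) =
      (v 0).1 0 * fderiv ℝ (fun y => γ y α) e ((Pi.single 0 1 : Fin 1 → ℝ), 0) +
        ∑ β : Fin N, (v 0).2 β * fderiv ℝ (fun y => γ y α) e ((0 : Fin 1 → ℝ), Pi.single β 1) :=
    fun α => fderiv_dir_decomp _ e (v 0)
  have hd1 : ∀ α : Fin N, fderiv ℝ (fun y => γ y α) e (v 1) =
      (v 1).1 0 * fderiv ℝ (fun y => γ y α) e ((Pi.single 0 1 : Fin 1 → ℝ), 0) +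
        ∑ β : Fin N, (v 1).2 β * fderiv ℝ (fun y => γ y α) e ((0 : Fin 1 → ℝ), Pi.single β 1) :=
    fun α => fderiv_dir_decomp _ e (v 1)
  simp only [hd0, hd1]
  exact keyB (γ e) (fun α => fderiv ℝ (fun y => γ y α) e ((Pi.single 0 1 : Fin 1 → ℝ), 0))
    (fun α β => fderiv ℝ (fun y => γ y α) e ((0 : Fin 1 → ℝ), Pi.single β 1))
    (ϑ e.1 0) (H (e.1, e.2, fun _ => γ e)) (fun α β => hc2 e α β) (fun α => hHJ e α)
    ((v 0).1 0) ((v 1).1 0) (fun β => (v 0).2 β) (fun β => (v 1).2 β)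
lemma partB2 {N : ℕ} (γ : Eb N → Fin N → ℝ) (hγ : ContDiff ℝ (⊤ : ℕ∞) γ)
    (ϑ : (Fin 1 → ℝ) → Fin 1 → ℝ)
    (hHJ : ∀ (e : Eb N) (α : Fin N),
      (∑ β : Fin N, γ e β * fderiv ℝ (fun y => γ y α) e (0, Pi.single β 1)) +
        fderiv ℝ (fun y => γ y α) e (Pi.single 0 1, 0) - ϑ e.1 0 * γ e α = 0)
    (σ : (Fin 1 → ℝ) → Fin N → ℝ) (hσ : ContDiff ℝ (⊤ : ℕ∞) σ)
    (hint : ∀ (t : Fin 1 → ℝ) (α : Fin N),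
      fderiv ℝ σ t (Pi.single 0 1) α = γ (t, σ t) α)
    (t : Fin 1 → ℝ) (α : Fin N) :
    fderiv ℝ (fun s => γ (s, σ s) α) t (Pi.single 0 1) = ϑ t 0 * γ (t, σ t) α := by
  have hσd : Differentiable ℝ σ := hσ.differentiable (by simp)
  have hγd : Differentiable ℝ γ := hγ.differentiable (by simp)
  have hγα : Differentiable ℝ (fun y : Eb N => γ y α) := differentiable_pi.mp hγd α
  have hinner : HasFDerivAt (fun s : Fin 1 → ℝ => ((s, σ s) : Eb N))
      ((ContinuousLinearMap.id ℝ (Fin 1 → ℝ)).prod (fderiv ℝ σ t)) t :=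
    HasFDerivAt.prodMk (hasFDerivAt_id t) (hσd t).hasFDerivAt
  have hcomp : HasFDerivAt (fun s => γ (s, σ s) α)
      ((fderiv ℝ (fun y => γ y α) (t, σ t)).comp
        ((ContinuousLinearMap.id ℝ (Fin 1 → ℝ)).prod (fderiv ℝ σ t))) t :=
    (hγα (t, σ t)).hasFDerivAt.comp (f := fun s : Fin 1 → ℝ => ((s, σ s) : Eb N)) t hinner
  rw [hcomp.fderiv]
  have happ : ((fderiv ℝ (fun y => γ y α) (t, σ t)).comp
      ((ContinuousLinearMap.id ℝ (Fin 1 → ℝ)).prod (fderiv ℝ σ t))) (Pi.single 0 1) =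
      fderiv ℝ (fun y => γ y α) (t, σ t)
        ((Pi.single 0 1 : Fin 1 → ℝ), fderiv ℝ σ t (Pi.single 0 1)) := rfl
  rw [happ, fderiv_dir_decomp]
  simp only [hint t, Pi.single_eq_same, one_mul]
  have := hHJ (t, σ t) α
  simp only at this
  linarith


/-- Conformal time-dependent mechanics (`m = 1`): base `ℝ` with coordinate `t`,
Hamiltonian `H = ½ δ^{αβ} p_α p_β`, and closed 1-form `ϑ = ϑ_t dt`.
(A) A section `φ(t) = (t, σ^α(t), p_α(t))` of `J¹π* → ℝ` satisfies
`φ*(ι_X (Ω_θ)_h) = 0` for all smooth vector fields `X` iff `dσ^α/dt = p_α` and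
`dp_α/dt = ϑ_t p_α`.
(B) For a closed section `γ̄ = ρ dt + γ_α du^α`, the Hamilton–Jacobi condition
`d_ϑ(h∘μ∘γ̄) = 0` holds iff `γ_β ∂γ_α/∂u^β + ∂γ_α/∂t − ϑ_t γ_α = 0`; and when it holds,
every integral section `σ` of `h^γ` (i.e. `dσ^α/dt = γ_α(t,σ(t))`) gives a solution
`t ↦ (t, σ(t), γ(t,σ(t)))` of the equations in (A). -/
theorem conformal_time_dependent_mechanics (N : ℕ)
    (H : Jb 1 N → ℝ)
    (hHdef : ∀ q : Jb 1 N, H q = (1 / 2) * ∑ α : Fin N, q.2.2 0 α * q.2.2 0 α)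
    (ϑ : (Fin 1 → ℝ) → Fin 1 → ℝ) (hϑ : ContDiff ℝ (⊤ : ℕ∞) ϑ) :
    -- (A)
    (∀ (σ : (Fin 1 → ℝ) → Fin N → ℝ) (P : (Fin 1 → ℝ) → Fin 1 → Fin N → ℝ),
      ContDiff ℝ (⊤ : ℕ∞) σ → ContDiff ℝ (⊤ : ℕ∞) P →
      ((∀ X : Jb 1 N → Jb 1 N, ContDiff ℝ (⊤ : ℕ∞) X →
          ∀ (t : Fin 1 → ℝ) (v : Fin 1 → Fin 1 → ℝ),
            pullC (secJ 1 N σ P) (iotaV X (OmegaThH 1 N H ϑ)) t v = 0) ↔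
        (∀ (t : Fin 1 → ℝ) (α : Fin N),
          fderiv ℝ σ t (Pi.single 0 1) α = P t 0 α ∧
          fderiv ℝ P t (Pi.single 0 1) 0 α = ϑ t 0 * P t 0 α))) ∧
    -- (B)
    (∀ (ρ : Eb N → ℝ) (γ : Eb N → Fin N → ℝ),
      ContDiff ℝ (⊤ : ℕ∞) ρ → ContDiff ℝ (⊤ : ℕ∞) γ →
      -- closedness of `γ̄ = ρ dt + γ_α du^α`:  `∂ρ/∂u^α = ∂γ_α/∂t`
      (∀ (e : Eb N) (α : Fin N),
        fderiv ℝ ρ e (0, Pi.single α 1) =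
          fderiv ℝ (fun y => γ y α) e (Pi.single 0 1, 0)) →
      -- closedness of `γ̄`:  `∂γ_α/∂u^β = ∂γ_β/∂u^α`
      (∀ (e : Eb N) (α β : Fin N),
        fderiv ℝ (fun y => γ y α) e (0, Pi.single β 1) =
          fderiv ℝ (fun y => γ y β) e (0, Pi.single α 1)) →
      -- `h∘μ∘γ̄ = −H(t,u,γ(t,u)) dt + γ_α du^α` as a 1-form on `E`
      ∀ G : Coch (Eb N) 1,
      (∀ (e : Eb N) (v : Fin 1 → Eb N),
        G e v = -(H (e.1, e.2, fun _ => γ e)) * (v 0).1 0 +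
          ∑ α : Fin N, γ e α * (v 0).2 α) →
      -- `d_ϑ(h∘μ∘γ̄) = 0` iff the coordinate Hamilton–Jacobi equation
      (((∀ (e : Eb N) (v : Fin 2 → Eb N),
          extDer G e v - wedge1 (thE N ϑ) G e v = 0) ↔
        (∀ (e : Eb N) (α : Fin N),
          (∑ β : Fin N, γ e β * fderiv ℝ (fun y => γ y α) e (0, Pi.single β 1)) +
            fderiv ℝ (fun y => γ y α) e (Pi.single 0 1, 0) - ϑ e.1 0 * γ e α = 0)) ∧
      -- and when it holds, integral sections of `h^γ` solve the equations of (A)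
      ((∀ (e : Eb N) (v : Fin 2 → Eb N),
          extDer G e v - wedge1 (thE N ϑ) G e v = 0) →
        ∀ σ : (Fin 1 → ℝ) → Fin N → ℝ, ContDiff ℝ (⊤ : ℕ∞) σ →
          (∀ (t : Fin 1 → ℝ) (α : Fin N),
            fderiv ℝ σ t (Pi.single 0 1) α = γ (t, σ t) α) →
          (∀ (t : Fin 1 → ℝ) (α : Fin N),
            fderiv ℝ σ t (Pi.single 0 1) α = γ (t, σ t) α ∧
            fderiv ℝ (fun s => γ (s, σ s) α) t (Pi.single 0 1) =
              ϑ t 0 * γ (t, σ t) α)))) := by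
  refine ⟨fun σ P hσ hP => partA H hHdef ϑ σ P hσ hP, ?_⟩
  intro ρ γ hρ hγ hc1 hc2 G hG
  have hGfun : G = fun (e : Eb N) (v : Fin 1 → Eb N) =>
      -(H (e.1, e.2, fun _ => γ e)) * (v 0).1 0 + ∑ α : Fin N, γ e α * (v 0).2 α :=
    funext fun e => funext fun v => hG e v
  subst hGfun
  refine ⟨⟨fun hcond => partB_forward H hHdef γ hγ ϑ hc2 hcond,
    fun hHJ => partB_backward H hHdef γ hγ ϑ hc2 hHJ⟩, ?_⟩
  intro hcond σ hσ hint t α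
  exact ⟨hint t α,
    partB2 γ hγ ϑ (partB_forward H hHdef γ hγ ϑ hc2 hcond) σ hσ hint t α⟩
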